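/- The map κ = P ∘ κ_0, where κ_0(r,y) = y + u + (−(1/2)f(y,y) + ri)x and P : Q → Q/C* is the projection, is injective on R × M_u. -/
import Mathlib


open Complex Finset ComplexConjugate

/-- The standard pseudo-Hermitian form of signature `(p,q)` on `ℂ^(p+q)`. -/
noncomputable def hform (p q : ℕ) (u v : Fin (p + q) → ℂ) : ℂ :=
  ∑ j : Fin (p + q), (if (j : ℕ) < p then (1 : ℂ) else -1) * u j * conj (v j)

/-- The map `κ₀(r,y) = y + u + (-(1/2)f(y,y) + ri)·x`. -/
noncomputable def kappa0 (p q : ℕ) (x u : Fin (p + q) → ℂ) (r : ℝ)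
    (y : Fin (p + q) → ℂ) : Fin (p + q) → ℂ :=
  y + u + (-(1 / 2) * hform p q y y + r * Complex.I) • x

lemma hform_add_left (p q : ℕ) (v w z : Fin (p + q) → ℂ) :
    hform p q (v + w) z = hform p q v z + hform p q w z := by
  unfold hform
  rw [← Finset.sum_add_distrib]
  refine Finset.sum_congr rfl fun j _ => ?_
  simp only [Pi.add_apply]; ring

lemma hform_smul_left (p q : ℕ) (s : ℂ) (v z : Fin (p + q) → ℂ) :
    hform p q (s • v) z = s * hform p q v z := by
  unfold hform
  rw [Finset.mul_sum]
  refine Finset.sum_congr rfl fun j _ => ?_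
  simp only [Pi.smul_apply, smul_eq_mul]; ring

lemma hform_conj (p q : ℕ) (v w : Fin (p + q) → ℂ) :
    hform p q v w = conj (hform p q w v) := by
  unfold hform
  rw [map_sum]
  refine Finset.sum_congr rfl fun j _ => ?_
  by_cases hj : (j : ℕ) < p <;> simp [hj] <;> ring

lemma hform_kappa0 (p q : ℕ) (x u z w : Fin (p + q) → ℂ) (s : ℂ) :
    hform p q (z + u + s • x) w = hform p q z w + hform p q u w + s * hform p q x w := by
  rw [hform_add_left, hform_add_left, hform_smul_left]

/-- The map `κ = P ∘ κ₀ : ℝ × M_u → Q̃ = Q/ℂ*` is injective: if `κ₀(r',y')` is a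
nonzero complex multiple of `κ₀(r,y)` then `r = r'` and `y = y'`. -/
theorem kappa_injective (p q : ℕ) (hp : 1 ≤ p) (hq : 1 ≤ q)
    (x u : Fin (p + q) → ℂ) (hx : x ≠ 0) (hxQ : hform p q x x = 0)
    (hu : u ≠ 0) (huQ : hform p q u u = 0) (hux : hform p q u x = 1)
    (r r' : ℝ) (y y' : Fin (p + q) → ℂ)
    (hyx : hform p q y x = 0) (hyu : hform p q y u = 0)
    (hyx' : hform p q y' x = 0) (hyu' : hform p q y' u = 0)
    (c : ℂ) (hc : c ≠ 0)
    (h : kappa0 p q x u r' y' = c • kappa0 p q x u r y) :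
    r = r' ∧ y = y' := by
  have hxu : hform p q x u = 1 := by rw [hform_conj, hux, map_one]
  -- pairing with x shows c = 1
  have hc1 : c = 1 := by
    have e1 : hform p q (kappa0 p q x u r' y') x = 1 := by
      rw [kappa0, hform_kappa0, hyx', hux, hxQ]; ring
    rw [h, hform_smul_left, kappa0, hform_kappa0, hyx, hux, hxQ] at e1
    have : c * (0 + 1 + (-(1 / 2) * hform p q y y + ↑r * I) * 0) = c := by ring
    rwa [this] at e1
  subst hc1
  rw [one_smul] at h
  set s' : ℂ := -(1 / 2) * hform p q y' y' + ↑r' * I with hs'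
  set s : ℂ := -(1 / 2) * hform p q y y + ↑r * I with hs
  -- pairing with u shows s = s'
  have hss : s' = s := by
    have e2 : hform p q (kappa0 p q x u r' y') u = hform p q (kappa0 p q x u r y) u := by
      rw [h]
    rw [kappa0, kappa0, hform_kappa0, hform_kappa0, hyu, hyu', huQ, hxu, ← hs', ← hs] at e2
    simpa using e2
  have h' : y' + u + s • x = y + u + s • x := by
    rw [kappa0, kappa0, ← hs', ← hs, hss] at h
    exact h
  have hy : y' = y := by
    have := add_right_cancel (add_right_cancel h')
    exact this
  subst hy
  refine ⟨?_, rfl⟩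
  rw [hs', hs] at hss
  have : (r' : ℂ) * I = (r : ℂ) * I := add_left_cancel hss
  have h2 : (r' : ℂ) = r := mul_right_cancel₀ I_ne_zero this
  exact_mod_cast h2.symm
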